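/- Let s, u ∈ ℂ with s ≠ 0, let A = [[s, 1], [0, s⁻¹]], B = [[s, 0], [−u, s⁻¹]] in SL₂(ℂ), W = B·A⁻¹·B⁻¹·A, x = s + s⁻¹, and z = 2 + (2 − s² − s⁻²)u + u². Let n ≥ 1 be a natural number, and set Δ = ∑_{i=0}^{n−1} W^{−i} and Ω = A⁻¹·(I − B)·(I − A)·Δ. If the Riley condition S_n(z) = (u² − (u+1)(s² + s⁻² − 3))·S_{n−1}(z) holds, then trace(Ω) = x·(2 − x)·S_{n−1}(z) − 1. -/

import Mathlib

open Matrix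

set_option maxHeartbeats 2000000

private theorem sub_fin_two_aux (a b c d e f g h : ℂ) :
    !![a, b; c, d] - !![e, f; g, h] = !![a - e, b - f; c - g, d - h] := by
  ext i j
  fin_cases i <;> fin_cases j <;> simp

/-- Let `s, u ∈ ℂ` with `s ≠ 0`, let `A = !![s, 1; 0, s⁻¹]`, `B = !![s, 0; -u, s⁻¹]`,
`W = B * A⁻¹ * B⁻¹ * A`, `x = s + s⁻¹`, `z = 2 + (2 - s² - s⁻²)u + u²`. Let `n ≥ 1` be a
natural number, and set `Δ = ∑_{i=0}^{n-1} W^(-i)` and `Ω = A⁻¹ * (1 - B) * (1 - A) * Δ`.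
If the Riley condition `S n = (u² - (u+1)(s² + s⁻² - 3)) * S (n-1)` holds, then
`trace Ω = x * (2 - x) * S (n-1) - 1`. -/
theorem trace_Omega_twist_knot (s u x z : ℂ) (hs : s ≠ 0)
    (hx : x = s + s⁻¹) (hz : z = 2 + (2 - s ^ 2 - s⁻¹ ^ 2) * u + u ^ 2)
    (S : ℤ → ℂ) (hS0 : S 0 = 1) (hS1 : S 1 = z)
    (hSrec : ∀ k : ℤ, S k = z * S (k - 1) - S (k - 2))
    (A B W : Matrix (Fin 2) (Fin 2) ℂ)
    (hA : A = !![s, 1; 0, s⁻¹]) (hB : B = !![s, 0; -u, s⁻¹])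
    (hW : W = B * A⁻¹ * B⁻¹ * A)
    (n : ℕ) (hn : 1 ≤ n)
    (Δ Ω : Matrix (Fin 2) (Fin 2) ℂ)
    (hΔ : Δ = ∑ i ∈ Finset.range n, W ^ (-(i : ℤ)))
    (hΩ : Ω = A⁻¹ * (1 - B) * (1 - A) * Δ)
    (hRiley : S (n : ℤ) = (u ^ 2 - (u + 1) * (s ^ 2 + s⁻¹ ^ 2 - 3)) * S ((n : ℤ) - 1)) :
    Ω.trace = x * (2 - x) * S ((n : ℤ) - 1) - 1 := by
  -- basic S values
  have hSm1 : S (-1) = 0 := by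
    have h := hSrec 1
    norm_num [hS0, hS1] at h
    linear_combination h
  have hSm2 : S (-2) = -1 := by
    have h := hSrec 0
    norm_num [hS0, hSm1] at h
    linear_combination h
  -- explicit inverses
  have hAinv : A⁻¹ = !![s⁻¹, -1; 0, s] := by
    apply Matrix.inv_eq_right_inv
    rw [hA]
    ext i j
    fin_cases i <;> fin_cases j <;>
      simp [Matrix.mul_apply, Fin.sum_univ_two, Matrix.one_apply] <;> field_simp
  have hBinv : B⁻¹ = !![s⁻¹, 0; u, s] := by
    apply Matrix.inv_eq_right_inv
    rw [hB]
    ext i j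
    fin_cases i <;> fin_cases j <;>
      simp [Matrix.mul_apply, Fin.sum_univ_two, Matrix.one_apply] <;> field_simp <;> ring
  -- concrete inverse of W
  set V : Matrix (Fin 2) (Fin 2) ℂ :=
    !![(1 + u) ^ 2 - u * s⁻¹ ^ 2, s * (1 + u) - s⁻¹;
       u * (s⁻¹ - s - s * u), 1 - s ^ 2 * u] with hV
  have hWV : W * V = 1 := by
    rw [hW, hAinv, hBinv, hA, hB, hV]
    ext i j
    fin_cases i <;> fin_cases j <;>
      (simp [Matrix.mul_apply, Fin.sum_univ_two, Matrix.one_apply]; field_simp; ring)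
  have hpowinv : ∀ i : ℕ, W ^ (-(i : ℤ)) = V ^ i := by
    intro i
    rw [Matrix.zpow_neg_natCast]
    apply Matrix.inv_eq_right_inv
    induction i with
    | zero => simp
    | succ k ih =>
        rw [pow_succ', pow_succ, mul_assoc, ← mul_assoc (W ^ k) (V ^ k) V, ih, one_mul, hWV]
  -- Cayley–Hamilton for V
  have hVV : V * V = z • V - 1 := by
    rw [hV, hz]
    ext i j
    fin_cases i <;> fin_cases j <;>
      (simp [Matrix.mul_apply, Fin.sum_univ_two, Matrix.one_apply, Matrix.smul_apply,
        Matrix.sub_apply, smul_eq_mul]; field_simp; ring)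
  -- power formula
  have hVpow : ∀ i : ℕ, V ^ i = S ((i : ℤ) - 1) • V - S ((i : ℤ) - 2) • 1 := by
    intro i
    induction i using Nat.twoStepInduction with
    | zero => norm_num [hSm1, hSm2]
    | one => norm_num [hS0, hSm1]
    | more k ih1 ih2 =>
        have e1 : ((k + 2 : ℕ) : ℤ) - 1 = (k : ℤ) + 1 := by push_cast; ring
        have e2 : ((k + 2 : ℕ) : ℤ) - 2 = (k : ℤ) := by push_cast; ring
        have e3 : ((k + 1 : ℕ) : ℤ) - 1 = (k : ℤ) := by push_cast; ring
        have e4 : ((k + 1 : ℕ) : ℤ) - 2 = (k : ℤ) - 1 := by push_cast; ring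
        have hrec : S ((k : ℤ) + 1) = z * S ((k : ℤ)) - S ((k : ℤ) - 1) := by
          have h := hSrec ((k : ℤ) + 1)
          norm_num at h
          convert h using 3 <;> ring
        rw [e3, e4] at ih2
        rw [show k + 2 = (k + 1) + 1 from rfl, pow_succ, ih2, e1, e2, hrec, sub_mul,
          smul_mul_assoc, smul_mul_assoc, one_mul, hVV]
        ext i j
        simp [Matrix.sub_apply, Matrix.smul_apply, Matrix.one_apply, smul_eq_mul]
        split_ifs <;> ring
  have hss : s * s⁻¹ = 1 := mul_inv_cancel₀ hs
  -- trace of C and C * V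
  have ht0 : (A⁻¹ * (1 - B) * (1 - A)).trace = 2 * x - 4 - u := by
    rw [hAinv, hA, hB, hx, Matrix.one_fin_two]
    simp only [sub_fin_two_aux, Matrix.mul_fin_two, Matrix.trace_fin_two_of]
    field_simp
    ring
  have ht1 : (A⁻¹ * (1 - B) * (1 - A) * V).trace =
      z * (2 * x - 4 - u) - x * (2 - x) - 1 + (u ^ 2 - (u + 1) * (s ^ 2 + s⁻¹ ^ 2 - 3)) := by
    rw [hAinv, hA, hB, hV, hx, hz, Matrix.one_fin_two]
    simp only [sub_fin_two_aux, Matrix.mul_fin_two, Matrix.trace_fin_two_of]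
    linear_combination ((-6 : ℂ) + (-6 : ℂ) * u + (-3 : ℂ) * u ^ 2 + (1 : ℂ) * s⁻¹ +
      (3 : ℂ) * s⁻¹ * u + (2 : ℂ) * s⁻¹ ^ 2 * u + (1 : ℂ) * s + (3 : ℂ) * s * u +
      (-1 : ℂ) * s * s⁻¹ ^ 2 * u + (2 : ℂ) * s ^ 2 * u + (-1 : ℂ) * s ^ 2 * s⁻¹ * u) * hss
  -- trace of Ω as a sum
  have hΩtr : Ω.trace = ∑ i ∈ Finset.range n,
      (S ((i : ℤ) - 1) * (z * (2 * x - 4 - u) - x * (2 - x) - 1 +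
          (u ^ 2 - (u + 1) * (s ^ 2 + s⁻¹ ^ 2 - 3))) -
        S ((i : ℤ) - 2) * (2 * x - 4 - u)) := by
    rw [hΩ, hΔ]
    simp_rw [hpowinv]
    rw [Finset.mul_sum, Matrix.trace_sum]
    refine Finset.sum_congr rfl fun i _ => ?_
    rw [hVpow i, mul_sub, Matrix.mul_smul, Matrix.mul_smul, mul_one, Matrix.trace_sub,
      Matrix.trace_smul, Matrix.trace_smul, ht0, ht1, smul_eq_mul, smul_eq_mul]
  -- key summation identity
  have key : ∀ m : ℕ, (∑ i ∈ Finset.range m,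
      (S ((i : ℤ) - 1) * (z * (2 * x - 4 - u) - x * (2 - x) - 1 +
          (u ^ 2 - (u + 1) * (s ^ 2 + s⁻¹ ^ 2 - 3))) -
        S ((i : ℤ) - 2) * (2 * x - 4 - u))) =
      x * (2 - x) * S ((m : ℤ) - 1) + S (m : ℤ) -
        (u ^ 2 - (u + 1) * (s ^ 2 + s⁻¹ ^ 2 - 3)) * S ((m : ℤ) - 1) - 1 := by
    intro m
    induction m with
    | zero => norm_num [hSm1, hS0]
    | succ m ih =>
        rw [Finset.sum_range_succ, ih]
        have e1 : ((m + 1 : ℕ) : ℤ) - 1 = (m : ℤ) := by push_cast; ring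
        have e2 : ((m + 1 : ℕ) : ℤ) = (m : ℤ) + 1 := by push_cast; ring
        rw [e1, e2]
        have h1 : S ((m : ℤ) + 1) = z * S ((m : ℤ)) - S ((m : ℤ) - 1) := by
          have h := hSrec ((m : ℤ) + 1)
          convert h using 3 <;> ring
        have h2 : S ((m : ℤ) - 2) = z * S ((m : ℤ) - 1) - S (m : ℤ) := by
          linear_combination hSrec (m : ℤ)
        have hcB : (1 : ℂ) + (2 * x - 4 - u) =
            x * (2 - x) + z - (u ^ 2 - (u + 1) * (s ^ 2 + s⁻¹ ^ 2 - 3)) := by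
          rw [hx, hz]; linear_combination (2 : ℂ) * hss
        have hcA : x * (2 - x) - (u ^ 2 - (u + 1) * (s ^ 2 + s⁻¹ ^ 2 - 3)) +
            (z * (2 * x - 4 - u) - x * (2 - x) - 1 +
              (u ^ 2 - (u + 1) * (s ^ 2 + s⁻¹ ^ 2 - 3))) - z * (2 * x - 4 - u) = -1 := by
          rw [hx, hz]; ring
        rw [h1, h2]
        linear_combination S (m : ℤ) * hcB + S ((m : ℤ) - 1) * hcA
  rw [hΩtr, key n, hRiley]
  ring
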